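/- Fix m ≥ 1 and let ω be a primitive m-th root of unity in ℂ. For an n×n complex matrix A define per_ω A = ∑_{s ∈ S_n} ω^{d(s)} ∏_{i=1}^n a_{i,s(i)}, where d(s) = n − γ(s) is the decrement of s. Then for n ≥ 2, per_ω A = a_{11} per_ω(Ā_{11}) + ω ∑_{j=2}^n a_{1j} per_ω(Ā_{1j}). -/

import Mathlib

open Matrix BigOperators

/-- Number of cycles of a permutation, counting fixed points as cycles of length 1. -/
def cycleCount {n : ℕ} (s : Equiv.Perm (Fin n)) : ℕ :=
  Multiset.card s.cycleType + (n - s.support.card)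

/-- The `ω`-permanent: `per_ω A = ∑_s ω^(d(s)) ∏_i a_{i,s(i)}`, where `d(s) = n - γ(s)`
is the decrement of `s`. -/
noncomputable def perOmega {k : ℕ} (ω : ℂ) (A : Matrix (Fin k) (Fin k) ℂ) : ℂ :=
  ∑ s : Equiv.Perm (Fin k), ω ^ (k - cycleCount s) * ∏ i, A i (s i)

/-- The combinatorial minor matrix `Ā_{1j}`. -/
def cminor {R : Type*} [CommRing R] {n : ℕ}
    (A : Matrix (Fin (n + 1)) (Fin (n + 1)) R) (j : Fin (n + 1)) :
    Matrix (Fin n) (Fin n) R :=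
  fun i k => A i.succ (if (k : ℕ) + 1 = (j : ℕ) then 0 else k.succ)

section Aux

open Equiv Equiv.Perm Finset

lemma mcard_le_sum' (t : Multiset ℕ) (h : ∀ x ∈ t, 1 ≤ x) : Multiset.card t ≤ t.sum := by
  induction t using Multiset.induction_on with
  | empty => simp
  | cons a s ih =>
    simp only [Multiset.card_cons, Multiset.sum_cons]
    have := h a (Multiset.mem_cons_self a s)
    have := ih (fun x hx => h x (Multiset.mem_cons_of_mem hx))
    omega

lemma card_cycleType_le' {n : ℕ} (s : Equiv.Perm (Fin n)) :
    Multiset.card s.cycleType ≤ s.support.card := by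
  rw [← Equiv.Perm.sum_cycleType]
  exact mcard_le_sum' _ (fun x hx => le_trans one_le_two (Equiv.Perm.two_le_of_mem_cycleType hx))

lemma support_card_le' {n : ℕ} (s : Equiv.Perm (Fin n)) : s.support.card ≤ n := by
  simpa using Finset.card_le_card (Finset.subset_univ s.support)

lemma cycleCount_le' {n : ℕ} (s : Equiv.Perm (Fin n)) : cycleCount s ≤ n := by
  have h1 := card_cycleType_le' s
  have h2 := support_card_le' s
  unfold cycleCount; omega

lemma cycleCount_swap_mul {N : ℕ} (s : Equiv.Perm (Fin N)) (x : Fin N) (hx : s x ≠ x) :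
    cycleCount (swap x (s x) * s) = cycleCount s + 1 := by
  classical
  set c := s.cycleOf x with hc
  have hcx : c x = s x := s.cycleOf_apply_self x
  have hcyc : c.IsCycle := Equiv.Perm.isCycle_cycleOf s hx
  have hmem : c ∈ s.cycleFactorsFinset :=
    (Equiv.Perm.cycleOf_mem_cycleFactorsFinset_iff).mpr (Equiv.Perm.mem_support.2 hx)
  have hdisj : Equiv.Perm.Disjoint (s * c⁻¹) c :=
    Equiv.Perm.disjoint_mul_inv_of_mem_cycleFactorsFinset hmem
  set g := s * c⁻¹ with hg
  have hs_eq : g * c = s := by rw [hg, inv_mul_cancel_right]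
  have hxc : x ∈ c.support := by
    rw [Equiv.Perm.mem_support, hcx]; exact hx
  have hsxc : s x ∈ c.support := by
    rw [hc, Equiv.Perm.mem_support_cycleOf_iff]
    exact ⟨⟨1, by simp⟩, Equiv.Perm.mem_support.2 hx⟩
  have hgx : g x = x := by
    rcases hdisj x with h | h
    · exact h
    · exact absurd h (Equiv.Perm.mem_support.1 hxc)
  have hgsx : g (s x) = s x := by
    rcases hdisj (s x) with h | h
    · exact h
    · exact absurd h (Equiv.Perm.mem_support.1 hsxc)
  have hdsw : Equiv.Perm.Disjoint (swap x (s x)) g := by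
    intro a
    by_cases hax : a = x
    · right; rw [hax]; exact hgx
    by_cases hasx : a = s x
    · right; rw [hasx]; exact hgsx
    · left; exact swap_apply_of_ne_of_ne hax hasx
  have hcomm : swap x (s x) * s = g * (swap x (s x) * c) := by
    calc swap x (s x) * s = swap x (s x) * (g * c) := by rw [hs_eq]
    _ = swap x (s x) * g * c := (mul_assoc (swap x (s x)) g c).symm
    _ = g * swap x (s x) * c := by rw [hdsw.commute.eq]
    _ = g * (swap x (s x) * c) := mul_assoc g (swap x (s x)) c
  have hsupc : c.support ⊆ s.support := Equiv.Perm.support_cycleOf_le s x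
  have hcxne : c x ≠ x := by rw [hcx]; exact hx
  have hNs : s.support.card ≤ N := support_card_le' s
  have hscards : g.support.card + c.support.card = s.support.card := by
    rw [← hs_eq]; exact hdisj.card_support_mul.symm
  have hstypes : Multiset.card s.cycleType = Multiset.card g.cycleType + 1 := by
    rw [← hs_eq, hdisj.cycleType_mul, hcyc.cycleType]
    simp
  by_cases h2 : c (c x) = x
  · have hceq : c = swap x (c x) := hcyc.eq_swap_of_apply_apply_eq_self hcxne h2
    have hT : swap x (s x) * c = 1 := by
      rw [hceq, ← hcx]; exact swap_mul_self _ _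
    have hgs : swap x (s x) * s = g := by rw [hcomm, hT, mul_one]
    have hcsupp : c.support.card = 2 := by
      rw [hceq]; exact Equiv.Perm.card_support_swap hcxne.symm
    rw [hgs]
    unfold cycleCount
    omega
  · have hT : (swap x (s x) * c).IsCycle := by
      rw [← hcx]; exact hcyc.swap_mul hcxne h2
    have hTsupp : (swap x (s x) * c).support = c.support \ {x} := by
      rw [← hcx]; exact Equiv.Perm.support_swap_mul_eq c x h2
    have hTcard : (swap x (s x) * c).support.card = c.support.card - 1 := by
      rw [hTsupp, Finset.sdiff_singleton_eq_erase, Finset.card_erase_of_mem hxc]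
    have hdisj2 : Equiv.Perm.Disjoint g (swap x (s x) * c) := by
      rw [Equiv.Perm.disjoint_iff_disjoint_support] at hdisj ⊢
      refine Finset.disjoint_of_subset_right ?_ hdisj
      rw [hTsupp]; exact Finset.sdiff_subset
    have htype : (swap x (s x) * s).cycleType = g.cycleType + (swap x (s x) * c).cycleType := by
      rw [hcomm, hdisj2.cycleType_mul]
    have hcardT : Multiset.card (swap x (s x) * c).cycleType = 1 := by
      rw [hT.cycleType]; simp
    have hsupp2 : (swap x (s x) * s).support.card
        = g.support.card + (swap x (s x) * c).support.card := by
      rw [hcomm]; exact hdisj2.card_support_mul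
    have hc2 : 2 ≤ c.support.card := hcyc.two_le_card_support
    unfold cycleCount
    rw [htype, hsupp2, hTcard, Multiset.card_add, hcardT]
    omega

def finSuccEquivNe (n : ℕ) : Fin n ≃ {x : Fin (n+1) // x ≠ 0} where
  toFun k := ⟨k.succ, Fin.succ_ne_zero k⟩
  invFun x := x.1.pred x.2
  left_inv k := by simp
  right_inv x := by simp

lemma decomposeFin_zero {n : ℕ} (e : Equiv.Perm (Fin n)) :
    Equiv.Perm.decomposeFin.symm ((0 : Fin (n+1)), e)
      = e.extendDomain (finSuccEquivNe n) := by
  refine Equiv.ext fun x => ?_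
  induction x using Fin.cases with
  | zero =>
    rw [Equiv.Perm.decomposeFin_symm_apply_zero,
      Equiv.Perm.extendDomain_apply_not_subtype _ _ (by simp)]
  | succ i =>
    have h1 : (e.extendDomain (finSuccEquivNe n)) i.succ = (e i).succ := by
      have h2 := Equiv.Perm.extendDomain_apply_subtype e (finSuccEquivNe n)
        (b := i.succ) (Fin.succ_ne_zero i)
      rw [h2]
      simp [finSuccEquivNe]
    rw [Equiv.Perm.decomposeFin_symm_apply_succ, h1]
    simp

lemma cycleCount_decomposeFin_zero {n : ℕ} (e : Equiv.Perm (Fin n)) :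
    cycleCount (Equiv.Perm.decomposeFin.symm ((0 : Fin (n+1)), e)) = cycleCount e + 1 := by
  have h := support_card_le' e
  rw [decomposeFin_zero]
  unfold cycleCount
  rw [Equiv.Perm.cycleType_extendDomain, Equiv.Perm.card_support_extend_domain]
  omega

lemma cycleCount_decomposeFin_ne_zero {n : ℕ} (p : Fin (n+1)) (hp : p ≠ 0)
    (e : Equiv.Perm (Fin n)) :
    cycleCount (Equiv.Perm.decomposeFin.symm (p, e)) = cycleCount e := by
  set s := Equiv.Perm.decomposeFin.symm (p, e) with hsdef
  have hs0 : s 0 = p := Equiv.Perm.decomposeFin_symm_apply_zero p e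
  have hx : s 0 ≠ 0 := by rw [hs0]; exact hp
  have key : swap 0 (s 0) * s = Equiv.Perm.decomposeFin.symm ((0 : Fin (n+1)), e) := by
    refine Equiv.ext fun x => ?_
    induction x using Fin.cases with
    | zero =>
      rw [Equiv.Perm.mul_apply, hs0, swap_apply_right,
        Equiv.Perm.decomposeFin_symm_apply_zero]
    | succ i =>
      rw [Equiv.Perm.mul_apply, hs0, hsdef, Equiv.Perm.decomposeFin_symm_apply_succ,
        swap_apply_self, Equiv.Perm.decomposeFin_symm_apply_succ]
      rw [Equiv.swap_self]
      rfl
  have h := cycleCount_swap_mul s 0 hx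
  rw [key, cycleCount_decomposeFin_zero] at h
  omega

lemma swap_succ_eq {n : ℕ} (p : Fin (n+2)) (k : Fin (n+1)) :
    swap 0 p k.succ = if (k : ℕ) + 1 = (p : ℕ) then 0 else k.succ := by
  have hiff : ((k : ℕ) + 1 = (p : ℕ)) ↔ k.succ = p := by
    rw [Fin.ext_iff, Fin.val_succ]
  by_cases h : k.succ = p
  · rw [if_pos (hiff.mpr h), ← h, swap_apply_right]
  · rw [if_neg (fun hc => h (hiff.mp hc)), swap_apply_of_ne_of_ne (Fin.succ_ne_zero k) h]

lemma prod_decomposeFin {n : ℕ} (A : Matrix (Fin (n + 2)) (Fin (n + 2)) ℂ)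
    (p : Fin (n+2)) (e : Equiv.Perm (Fin (n+1))) :
    ∏ i, A i (Equiv.Perm.decomposeFin.symm (p, e) i)
      = A 0 p * ∏ i, cminor A p i (e i) := by
  rw [Fin.prod_univ_succ, Equiv.Perm.decomposeFin_symm_apply_zero]
  congr 1
  refine Finset.prod_congr rfl fun i _ => ?_
  rw [Equiv.Perm.decomposeFin_symm_apply_succ, swap_succ_eq]
  rfl

end Aux

/-- Expansion of the `ω`-permanent over the first row:
`per_ω A = a_{11} per_ω(Ā_{11}) + ω ∑_{j=2}^n a_{1j} per_ω(Ā_{1j})`. -/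
theorem stmt8 {m : ℕ} (hm : 1 ≤ m) (ω : ℂ) (hω : IsPrimitiveRoot ω m) {n : ℕ}
    (A : Matrix (Fin (n + 2)) (Fin (n + 2)) ℂ) :
    perOmega ω A = A 0 0 * perOmega ω (cminor A 0) +
      ω * ∑ j : Fin (n + 1), A 0 j.succ * perOmega ω (cminor A j.succ) := by
  classical
  have step1 : perOmega ω A = ∑ pe : Fin (n+2) × Equiv.Perm (Fin (n+1)),
      ω ^ (n + 2 - cycleCount (Equiv.Perm.decomposeFin.symm pe)) *
        ∏ i, A i (Equiv.Perm.decomposeFin.symm pe i) := by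
    rw [perOmega]
    exact (Equiv.sum_comp Equiv.Perm.decomposeFin.symm
      (fun s => ω ^ (n + 2 - cycleCount s) * ∏ i, A i (s i))).symm
  rw [step1, Fintype.sum_prod_type, Fin.sum_univ_succ]
  congr 1
  · -- p = 0 term
    rw [perOmega, Finset.mul_sum]
    refine Finset.sum_congr rfl fun e _ => ?_
    rw [prod_decomposeFin, cycleCount_decomposeFin_zero]
    have h1 : cycleCount e ≤ n + 1 := cycleCount_le' e
    have h2 : n + 2 - (cycleCount e + 1) = n + 1 - cycleCount e := by omega
    rw [h2]
    ring
  · -- p = j.succ terms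
    rw [Finset.mul_sum]
    refine Finset.sum_congr rfl fun j _ => ?_
    rw [perOmega, Finset.mul_sum, Finset.mul_sum]
    refine Finset.sum_congr rfl fun e _ => ?_
    rw [prod_decomposeFin, cycleCount_decomposeFin_ne_zero _ (Fin.succ_ne_zero j)]
    have h1 : cycleCount e ≤ n + 1 := cycleCount_le' e
    have h2 : n + 2 - cycleCount e = (n + 1 - cycleCount e) + 1 := by omega
    rw [h2, pow_succ]
    ring
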